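/- arXiv:0912.2932 — 2 statements merged into one kernel-verified Lean document; each statement's English description precedes it below -/
import Mathlib

section
/- Let F_q be a finite field with q elements, and let p, m ≥ 2. If there exists a p×(m+p) matrix M over F_q all of whose p×p minors are nonzero, then q ≥ max{p, m} + 1. -/
open Matrix

lemma det_one_updateColumn {F : Type*} [Field F] {p : ℕ} (i : Fin p) (b : Fin p → F) :
    ((1 : Matrix (Fin p) (Fin p) F).updateCol i b).det = b i := by
  rw [← Matrix.cramer_apply, Matrix.cramer_one]
  rfl

lemma det_one_updateColumn_two {F : Type*} [Field F] {p : ℕ} (i k : Fin p) (hik : i ≠ k)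
    (b c : Fin p → F) :
    (((1 : Matrix (Fin p) (Fin p) F).updateCol i b).updateCol k c).det
      = b i * c k - c i * b k := by
  set U : Matrix (Fin p) (Fin 2) F :=
    fun r t => if t = 0 then b r - (if r = i then 1 else 0) else c r - (if r = k then 1 else 0)
    with hU
  set V : Matrix (Fin 2) (Fin p) F :=
    fun t s => if t = 0 then (if s = i then 1 else 0) else (if s = k then 1 else 0) with hV
  have hM : ((1 : Matrix (Fin p) (Fin p) F).updateCol i b).updateCol k c = 1 + U * V := by
    ext r s
    simp only [Matrix.updateCol_apply, Matrix.add_apply, Matrix.mul_apply,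
      Fin.sum_univ_two, Matrix.one_apply]
    simp only [hU, hV]
    by_cases hsk : s = k <;> by_cases hsi : s = i <;>
      simp_all <;> by_cases hr : r = i <;> by_cases hrk : r = k <;> simp_all <;> ring
  rw [hM, Matrix.det_one_add_mul_comm]
  have hVU : V * U = !![b i - 1, c i; b k, c k - 1] := by
    ext t s
    simp only [Matrix.mul_apply]
    fin_cases t <;> fin_cases s <;>
      simp [hU, hV, Matrix.mul_apply, Finset.sum_ite_eq, hik, Ne.symm hik]
  rw [hVU]
  have : (1 : Matrix (Fin 2) (Fin 2) F) + !![b i - 1, c i; b k, c k - 1]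
      = !![b i, c i; b k, c k] := by
    ext t s
    fin_cases t <;> fin_cases s <;> simp [Matrix.one_apply] <;> ring
  rw [this, Matrix.det_fin_two_of]

lemma proj_card {F : Type*} [Field F] [Fintype F] [DecidableEq F] {ι : Type*} [Fintype ι]
    (f : ι → F × F)
    (h : ∀ a b, a ≠ b → (f a).1 * (f b).2 ≠ (f a).2 * (f b).1) :
    Fintype.card ι ≤ Fintype.card F + 1 := by
  have hinj : Function.Injective
      (fun a => if (f a).2 = 0 then (none : Option F) else some ((f a).1 / (f a).2)) := by
    intro a b hab
    by_contra hne
    by_cases h2a : (f a).2 = 0 <;> by_cases h2b : (f b).2 = 0 <;>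
      simp only [h2a, h2b, if_true, if_false, Option.some.injEq, reduceCtorEq] at hab
    · exact h a b hne (by rw [h2a, h2b]; ring)
    · exact h a b hne (by field_simp at hab; linear_combination hab)
  have := Fintype.card_le_of_injective _ hinj
  simpa using this


/-- If there is a `p × (m+p)` matrix (`p, m ≥ 2`) over a finite field with `q` elements all of
whose `p × p` minors are nonzero, then `q ≥ max {p, m} + 1`. -/
theorem stmt5 (F : Type*) [Field F] [Fintype F] (q p m : ℕ) (hq : Fintype.card F = q)
    (hp : 2 ≤ p) (hm : 2 ≤ m)
    (hex : ∃ M : Matrix (Fin p) (Fin (m + p)) F,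
      ∀ cols : Fin p → Fin (m + p), Function.Injective cols →
        (M.submatrix id cols).det ≠ 0) :
    max p m + 1 ≤ q := by
  classical
  obtain ⟨M, hM⟩ := hex
  have hinj : Function.Injective (Fin.natAdd m : Fin p → Fin (m + p)) := by
    intro a b hab
    have := congrArg Fin.val hab
    simp only [Fin.coe_natAdd] at this
    exact Fin.ext (by omega)
  set P := M.submatrix id (Fin.natAdd m) with hPdef
  have hPdet : P.det ≠ 0 := hM _ hinj
  have hPunit : IsUnit P.det := Ne.isUnit hPdet
  set N := P⁻¹ * M with hNdef
  have hsub : ∀ cols : Fin p → Fin (m + p),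
      N.submatrix id cols = P⁻¹ * M.submatrix id cols := by
    intro cols
    ext r s
    simp [hNdef, Matrix.mul_apply, Matrix.submatrix_apply]
  have hN : ∀ cols : Fin p → Fin (m + p), Function.Injective cols →
      (N.submatrix id cols).det ≠ 0 := by
    intro cols hc
    rw [hsub, Matrix.det_mul]
    refine mul_ne_zero ?_ (hM cols hc)
    rw [Matrix.det_nonsing_inv]
    simpa [Ring.inverse_eq_inv'] using inv_ne_zero hPdet
  have hId : ∀ r s : Fin p, N r (Fin.natAdd m s) = if r = s then 1 else 0 := by
    have h1 : N.submatrix id (Fin.natAdd m) = 1 := by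
      rw [hsub]
      exact Matrix.nonsing_inv_mul P hPunit
    intro r s
    have := congrFun (congrFun h1 r) s
    simpa [Matrix.one_apply] using this
  have hca : ∀ (j : Fin m) (r : Fin p), Fin.castAdd p j ≠ Fin.natAdd m r := by
    intro j r h
    have := congrArg Fin.val h
    simp only [Fin.coe_castAdd, Fin.coe_natAdd] at this
    omega
  -- entries nonzero
  have hEntry : ∀ (i : Fin p) (j : Fin m), N i (Fin.castAdd p j) ≠ 0 := by
    intro i j
    have hcols : Function.Injective
        (fun r : Fin p => if r = i then Fin.castAdd p j else Fin.natAdd m r) := by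
      intro a b hab
      by_cases ha : a = i <;> by_cases hb : b = i <;>
        simp only [ha, hb, if_true, if_false] at hab <;>
        first
        | (rw [ha, hb])
        | (exact absurd hab (hca _ _))
        | (exact absurd hab.symm (hca _ _))
        | (exact hinj hab)
    have hdet := hN _ hcols
    have heq : N.submatrix id (fun r : Fin p => if r = i then Fin.castAdd p j else Fin.natAdd m r)
        = (1 : Matrix (Fin p) (Fin p) F).updateCol i (fun r => N r (Fin.castAdd p j)) := by
      ext r s
      by_cases hs : s = i <;>
        simp [Matrix.updateCol_apply, hs, hId, Matrix.one_apply]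
    rw [heq, det_one_updateColumn] at hdet
    exact hdet
  -- 2x2 minors nonzero
  have hMinor : ∀ (i k : Fin p), i ≠ k → ∀ (j l : Fin m), j ≠ l →
      N i (Fin.castAdd p j) * N k (Fin.castAdd p l)
        - N i (Fin.castAdd p l) * N k (Fin.castAdd p j) ≠ 0 := by
    intro i k hik j l hjl
    have hcols : Function.Injective
        (fun r : Fin p => if r = i then Fin.castAdd p j else
          if r = k then Fin.castAdd p l else Fin.natAdd m r) := by
      intro a b hab
      by_cases ha : a = i <;> by_cases hb : b = i <;>
        by_cases ha' : a = k <;> by_cases hb' : b = k <;>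
        simp only [ha, hb, ha', hb', if_true, if_false, hik, hik.symm] at hab ⊢ <;>
        first
        | rfl
        | (exact absurd (congrArg Fin.val hab) (by simp [Fin.ext_iff] at hjl ⊢; omega))
        | (exact absurd hab (hca _ _))
        | (exact absurd hab.symm (hca _ _))
        | (exact hinj hab)
    have hdet := hN _ hcols
    have heq : N.submatrix id (fun r : Fin p => if r = i then Fin.castAdd p j else
          if r = k then Fin.castAdd p l else Fin.natAdd m r)
        = ((1 : Matrix (Fin p) (Fin p) F).updateCol i
            (fun r => N r (Fin.castAdd p j))).updateCol k (fun r => N r (Fin.castAdd p l)) := by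
      ext r s
      by_cases hs : s = i <;> by_cases hs' : s = k <;>
        simp [Matrix.updateCol_apply, hs, hs', hik, hik.symm, hId, Matrix.one_apply]
    rw [heq, det_one_updateColumn_two i k hik] at hdet
    exact hdet
  -- indices
  have hp0 : (0 : ℕ) < p := by omega
  have hp1 : (1 : ℕ) < p := by omega
  have hm0 : (0 : ℕ) < m := by omega
  have hm1 : (1 : ℕ) < m := by omega
  set i0 : Fin p := ⟨0, hp0⟩
  set i1 : Fin p := ⟨1, hp1⟩
  have hii : i0 ≠ i1 := by simp [i0, i1, Fin.ext_iff]
  set j0 : Fin m := ⟨0, hm0⟩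
  set j1 : Fin m := ⟨1, hm1⟩
  have hjj : j0 ≠ j1 := by simp [j0, j1, Fin.ext_iff]
  -- bound q ≥ m + 1
  have h1 : m + 2 ≤ q + 1 := by
    set f : Fin m ⊕ Fin 2 → F × F :=
      Sum.elim (fun j => (N i0 (Fin.castAdd p j), N i1 (Fin.castAdd p j)))
        (fun t => if t = 0 then ((1 : F), (0 : F)) else ((0 : F), (1 : F))) with hf
    have hcond : ∀ a b, a ≠ b → (f a).1 * (f b).2 ≠ (f a).2 * (f b).1 := by
      rintro (j | t) (l | u) hab
      · have hjl : j ≠ l := fun h => hab (by rw [h])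
        simp only [hf, Sum.elim_inl]
        intro hcontra
        exact hMinor i0 i1 hii j l hjl (by rw [sub_eq_zero]; linear_combination hcontra)
      · fin_cases u <;> simp [hf] <;> first | exact hEntry _ _ | exact fun h => hEntry _ _ h.symm
      · fin_cases t <;> simp [hf] <;> first | exact hEntry _ _ | exact fun h => hEntry _ _ h.symm
      · fin_cases t <;> fin_cases u <;> first | (exact absurd rfl hab) | (simp [hf])
    have := proj_card f hcond
    simpa [hq] using this
  -- bound q ≥ p + 1
  have h2 : p + 2 ≤ q + 1 := by
    set f : Fin p ⊕ Fin 2 → F × F :=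
      Sum.elim (fun i => (N i (Fin.castAdd p j0), N i (Fin.castAdd p j1)))
        (fun t => if t = 0 then ((1 : F), (0 : F)) else ((0 : F), (1 : F))) with hf
    have hcond : ∀ a b, a ≠ b → (f a).1 * (f b).2 ≠ (f a).2 * (f b).1 := by
      rintro (i | t) (k | u) hab
      · have hik : i ≠ k := fun h => hab (by rw [h])
        simp only [hf, Sum.elim_inl]
        intro hcontra
        exact hMinor i k hik j0 j1 hjj (by rw [sub_eq_zero]; linear_combination hcontra)
      · fin_cases u <;> simp [hf] <;> first | exact hEntry _ _ | exact fun h => hEntry _ _ h.symm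
      · fin_cases t <;> simp [hf] <;> first | exact hEntry _ _ | exact fun h => hEntry _ _ h.symm
      · fin_cases t <;> fin_cases u <;> first | (exact absurd rfl hab) | (simp [hf])
    have := proj_card f hcond
    simpa [hq] using this
  omega
end

section
/- Let F be a field and M(s) a p×(m+p) monomial matrix with MDS coefficient matrix M = [I_p R] and degree matrix d_{i,j} = j − i for j ≥ i and 0 otherwise, so that the Plücker coordinate indexed by α = (α_1 < ⋯ < α_p) is M_α s^{|α|} with |α| = Σ_i (α_i − i) and M_α ≠ 0. Then for every full-rank m×(m+p) matrix [K_1 K_2] over F, the polynomial det [[K_1, K_2],[N(s), D(s)]] = Σ_α k_α M_α s^{|α|} is not the zero polynomial, where k_α is (up to sign) the m×m minor of [K_1 K_2] on the columns complementary to α. -/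
open Polynomial

set_option maxHeartbeats 1000000
set_option synthInstance.maxHeartbeats 400000

private lemma fin_le_of_strictMono {k n : ℕ} {f : Fin k → Fin n} (hf : StrictMono f)
    (i : Fin k) : (i : ℕ) ≤ (f i : ℕ) := by
  obtain ⟨i, hi⟩ := i
  induction i with
  | zero => simp
  | succ j ihj =>
      have hj : j < k := Nat.lt_of_succ_lt hi
      have h1 := ihj hj
      have h2 : f ⟨j, hj⟩ < f ⟨j + 1, hi⟩ := hf (by simp [Fin.lt_def])
      have h3 := Fin.lt_def.mp h2
      have h1' : j ≤ (f ⟨j, hj⟩ : ℕ) := h1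
      show j + 1 ≤ _
      omega

private lemma echelon_indep {F : Type*} [Field F] {d n : ℕ}
    (r : Fin d → Fin n → F) (q : Fin d → Fin n) (hq : StrictMono q)
    (hpiv : ∀ i, r i (q i) ≠ 0) (hech : ∀ i j, j < q i → r i j = 0) :
    LinearIndependent F r := by
  classical
  rw [Fintype.linearIndependent_iff]
  intro g hg
  by_contra hcon
  push_neg at hcon
  obtain ⟨i, hi⟩ := hcon
  set s := Finset.univ.filter (fun i => g i ≠ 0) with hs_def
  have hs : s.Nonempty := ⟨i, by simp [hs_def, hi]⟩
  set i0 := s.min' hs with hi0_def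
  have hi0 : g i0 ≠ 0 := by
    have := s.min'_mem hs
    simp only [hs_def, Finset.mem_filter] at this
    exact this.2
  have heval : (∑ i, g i • r i) (q i0) = 0 := by rw [hg]; rfl
  rw [Finset.sum_apply] at heval
  have hzero : ∑ i, g i * r i (q i0) = 0 := by simpa using heval
  rw [Finset.sum_eq_single i0] at hzero
  · rcases mul_eq_zero.mp hzero with h | h
    · exact hi0 h
    · exact hpiv i0 h
  · intro b _ hb
    rcases lt_or_gt_of_ne hb with h | h
    · have hgb : g b = 0 := by
        by_contra hgb
        have hbs : b ∈ s := by simp [hs_def, hgb]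
        exact absurd (s.min'_le b hbs) (not_le.2 h)
      simp [hgb]
    · simp [hech b _ (hq h)]
  · simp


private lemma echelon_basis {F : Type*} [Field F] {n : ℕ} :
    ∀ (d : ℕ) (W : Submodule F (Fin n → F)), Module.finrank F W = d →
    ∃ (r : Fin d → (Fin n → F)) (q : Fin d → Fin n),
      StrictMono q ∧ (∀ i, r i ∈ W) ∧ (∀ i, r i (q i) ≠ 0) ∧
      (∀ i j, j < q i → r i j = 0) := by
  intro d
  induction d with
  | zero =>
      intro W _
      exact ⟨finZeroElim, finZeroElim, fun a => a.elim0, fun a => a.elim0,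
        fun a => a.elim0, fun a => a.elim0⟩
  | succ d ih =>
      intro W hW
      classical
      have hne : W ≠ ⊥ := by
        intro h
        rw [h, finrank_bot] at hW
        omega
      obtain ⟨v0, hv0W, hv0⟩ := Submodule.exists_mem_ne_zero_of_ne_bot hne
      set S : Finset (Fin n) := Finset.univ.filter (fun j => ∃ v ∈ W, v j ≠ 0) with hS_def
      have hSne : S.Nonempty := by
        have : ∃ j, v0 j ≠ 0 := by
          by_contra h
          push_neg at h
          exact hv0 (funext h)
        obtain ⟨j, hj⟩ := this
        refine ⟨j, ?_⟩
        simp only [hS_def, Finset.mem_filter, Finset.mem_univ, true_and]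
        exact ⟨v0, hv0W, hj⟩
      set j0 := S.min' hSne with hj0_def
      have hj0S : j0 ∈ S := S.min'_mem hSne
      obtain ⟨v, hvW, hvj0⟩ : ∃ v ∈ W, v j0 ≠ 0 := by
        simpa only [hS_def, Finset.mem_filter, Finset.mem_univ, true_and] using hj0S
      have hlow : ∀ w ∈ W, ∀ j, j < j0 → w j = 0 := by
        intro w hw j hj
        by_contra h
        have hjS : j ∈ S := by
          simp only [hS_def, Finset.mem_filter, Finset.mem_univ, true_and]
          exact ⟨w, hw, h⟩
        exact absurd (S.min'_le j hjS) (not_le.2 hj)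
      set φ : W →ₗ[F] F := (LinearMap.proj j0).comp W.subtype with hφ_def
      have hφv : φ ⟨v, hvW⟩ = v j0 := rfl
      have hφsurj : Function.Surjective φ := by
        intro c
        refine ⟨(c / v j0) • ⟨v, hvW⟩, ?_⟩
        rw [map_smul, hφv, smul_eq_mul]
        field_simp
      have hker : Module.finrank F (LinearMap.ker φ) = d := by
        have h1 := LinearMap.finrank_range_add_finrank_ker φ
        rw [LinearMap.range_eq_top.2 hφsurj, finrank_top, Module.finrank_self, hW] at h1
        omega
      set W' : Submodule F (Fin n → F) := (LinearMap.ker φ).map W.subtype with hW'_def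
      have hW'rank : Module.finrank F W' = d := by
        rw [← hker]
        exact (Submodule.equivMapOfInjective W.subtype (Submodule.injective_subtype W)
          (LinearMap.ker φ)).symm.finrank_eq
      obtain ⟨r', q', hq', hmem', hpiv', hech'⟩ := ih W' hW'rank
      have hW'sub : ∀ x ∈ W', x ∈ W ∧ x j0 = 0 := by
        rintro x ⟨y, hy, rfl⟩
        refine ⟨y.2, ?_⟩
        have : φ y = 0 := hy
        exact this
      have hq'big : ∀ i, j0 < q' i := by
        intro i
        rcases lt_or_ge j0 (q' i) with h | h
        · exact h
        · exfalso
          apply hpiv' i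
          obtain ⟨hxW, hxj0⟩ := hW'sub _ (hmem' i)
          rcases lt_or_eq_of_le h with h' | h'
          · exact hlow _ hxW _ h'
          · rw [← h'] at hxj0; exact hxj0
      refine ⟨Fin.cons v r', Fin.cons j0 q', ?_, ?_, ?_, ?_⟩
      · intro a b hab
        induction a using Fin.cases with
        | zero =>
            induction b using Fin.cases with
            | zero => exact absurd hab (lt_irrefl _)
            | succ b => simpa using hq'big b
        | succ a =>
            induction b using Fin.cases with
            | zero => exact absurd hab (by simp [Fin.lt_def])
            | succ b =>
                simp only [Fin.cons_succ]
                exact hq' (by simpa [Fin.succ_lt_succ_iff] using hab)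
      · intro i
        induction i using Fin.cases with
        | zero => simpa using hvW
        | succ i => simpa using (hW'sub _ (hmem' i)).1
      · intro i
        induction i using Fin.cases with
        | zero => simpa using hvj0
        | succ i => simpa using hpiv' i
      · intro i j hj
        induction i using Fin.cases with
        | zero => exact hlow _ hvW _ (by simpa using hj)
        | succ i => exact hech' i j (by simpa using hj)

private lemma key_det {F : Type*} [Field F] {p m : ℕ}
    (Mcoef : Matrix (Fin p) (Fin (m + p)) F)
    (hzero : ∀ (i : Fin p) (j : Fin (m + p)), (j : ℕ) < (i : ℕ) → Mcoef i j = 0)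
    (hMDS : ∀ cols : Fin p → Fin (m + p), Function.Injective cols →
      (Mcoef.submatrix id cols).det ≠ 0)
    (Mpoly : Matrix (Fin p) (Fin (m + p)) F[X])
    (hMpoly : ∀ (i : Fin p) (j : Fin (m + p)),
      Mpoly i j = C (Mcoef i j) * X ^ ((j : ℕ) - (i : ℕ)))
    (K' : Matrix (Fin m) (Fin (m + p)) F)
    (q : Fin m → Fin (m + p)) (hq : StrictMono q)
    (hpiv : ∀ i, K' i (q i) ≠ 0) (hech : ∀ i j, j < q i → K' i j = 0) :
    ((Matrix.fromRows (K'.map C) Mpoly).submatrix id ⇑finSumFinEquiv).det ≠ 0 := by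
  classical
  set e := (finSumFinEquiv : Fin m ⊕ Fin p ≃ Fin (m + p)) with he_def
  set A := (Matrix.fromRows (K'.map C) Mpoly).submatrix id ⇑e with hA_def
  -- the pivot set and its complement
  set P : Finset (Fin (m + p)) := Finset.image q Finset.univ with hP_def
  have hPcard : P.card = m := by
    rw [hP_def, Finset.card_image_of_injective _ hq.injective, Finset.card_univ,
      Fintype.card_fin]
  have hPc : Pᶜ.card = p := by
    rw [Finset.card_compl, hPcard, Fintype.card_fin]
    omega
  set oiso := Pᶜ.orderIsoOfFin hPc with hoiso_def
  set qc : Fin p → Fin (m + p) := fun j => (oiso j : Fin (m + p)) with hqc_def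
  have hqc : StrictMono qc := fun a b h => Subtype.coe_lt_coe.mpr (oiso.strictMono h)
  have hqcmem : ∀ j, qc j ∉ P := fun j => Finset.mem_compl.mp (oiso j).2
  have hqP : ∀ i, q i ∈ P := fun i => Finset.mem_image_of_mem q (Finset.mem_univ i)
  set b : Fin m ⊕ Fin p → Fin (m + p) := Sum.elim q qc with hb_def
  have hbinj : Function.Injective b := by
    rintro (a | a) (c | c) h <;>
      simp only [hb_def, Sum.elim_inl, Sum.elim_inr] at h
    · rw [hq.injective h]
    · exact absurd (h ▸ hqP a) (hqcmem c)
    · exact absurd (h ▸ hqP c) (hqcmem a)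
    · rw [hqc.injective h]
  have hbbij : Function.Bijective b :=
    (Fintype.bijective_iff_injective_and_card b).mpr ⟨hbinj, by simp⟩
  set ψ : (Fin m ⊕ Fin p) ≃ Fin (m + p) := Equiv.ofBijective b hbbij with hψ_def
  have hψl : ∀ i, ψ (Sum.inl i) = q i := fun i => rfl
  have hψr : ∀ j, ψ (Sum.inr j) = qc j := fun j => rfl
  set τ : Equiv.Perm (Fin m ⊕ Fin p) := ψ.trans e.symm with hτ_def
  have hτl : ∀ i, τ (Sum.inl i) = e.symm (q i) := fun i => rfl
  have hτr : ∀ j, τ (Sum.inr j) = e.symm (qc j) := fun j => rfl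
  -- entries
  set co : (Fin m ⊕ Fin p) → (Fin m ⊕ Fin p) → F :=
    fun x y => Sum.elim (fun i => K' i (e y)) (fun i => Mcoef i (e y)) x with hco_def
  set ex : (Fin m ⊕ Fin p) → (Fin m ⊕ Fin p) → ℕ :=
    fun x y => Sum.elim (fun _ => 0) (fun i : Fin p => (e y : ℕ) - (i : ℕ)) x with hex_def
  have hA : ∀ x y, A x y = C (co x y) * X ^ (ex x y) := by
    rintro (i | i) y
    · simp [hA_def, hco_def, hex_def, Matrix.fromRows_apply_inl]
    · simp [hA_def, hco_def, hex_def, Matrix.fromRows_apply_inr, hMpoly]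
  set N : ℕ := ∑ j : Fin p, ((qc j : ℕ) - (j : ℕ)) with hN_def
  -- each permutation term is a monomial
  have hterm : ∀ σ : Equiv.Perm (Fin m ⊕ Fin p),
      (∏ y, A (σ y) y) = C (∏ y, co (σ y) y) * X ^ (∑ y, ex (σ y) y) := by
    intro σ
    calc (∏ y, A (σ y) y) = ∏ y, (C (co (σ y) y) * X ^ (ex (σ y) y)) := by
          refine Finset.prod_congr rfl fun y _ => ?_
          rw [hA]
      _ = _ := by
          rw [Finset.prod_mul_distrib, Finset.prod_pow_eq_pow_sum, map_prod]
  -- the N-th coefficient of the determinant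
  have hdet : A.det.coeff N = ∑ σ : Equiv.Perm (Fin m ⊕ Fin p),
      ((Equiv.Perm.sign σ : ℤ) : F) *
        (if (∑ y, ex (σ y) y) = N then (∏ y, co (σ y) y) else 0) := by
    rw [Matrix.det_apply', Polynomial.finset_sum_coeff]
    refine Finset.sum_congr rfl fun σ _ => ?_
    rw [hterm σ, ← Polynomial.C_eq_intCast, ← mul_assoc, ← map_mul,
      Polynomial.coeff_C_mul, Polynomial.coeff_X_pow]
    by_cases h : (∑ y, ex (σ y) y) = N
    · simp only [if_pos h, if_pos h.symm, mul_one]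
    · simp only [if_neg h, if_neg (Ne.symm h), mul_zero]
  -- sum of all column positions splits along pivots/non-pivots
  have hsum_split : ∀ σ : Equiv.Perm (Fin m ⊕ Fin p),
      (∑ i : Fin m, (e (σ⁻¹ (Sum.inl i)) : ℕ)) + (∑ j : Fin p, (e (σ⁻¹ (Sum.inr j)) : ℕ))
        = (∑ i : Fin m, (q i : ℕ)) + (∑ j : Fin p, (qc j : ℕ)) := by
    intro σ
    calc (∑ i : Fin m, (e (σ⁻¹ (Sum.inl i)) : ℕ)) + (∑ j : Fin p, (e (σ⁻¹ (Sum.inr j)) : ℕ))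
        = ∑ x : Fin m ⊕ Fin p, (e (σ⁻¹ x) : ℕ) :=
          (Fintype.sum_sum_type (fun x : Fin m ⊕ Fin p => (e (σ⁻¹ x) : ℕ))).symm
      _ = ∑ y : Fin m ⊕ Fin p, (e y : ℕ) := Equiv.sum_comp σ⁻¹ (fun y => (e y : ℕ))
      _ = ∑ x : Fin m ⊕ Fin p, (ψ x : ℕ) := by
            rw [Equiv.sum_comp ψ (fun t : Fin (m + p) => (t : ℕ)),
              Equiv.sum_comp e (fun t : Fin (m + p) => (t : ℕ))]
      _ = _ := by simp only [Fintype.sum_sum_type, hψl, hψr]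
  -- the exponent sum of a permutation
  have hEsum : ∀ σ : Equiv.Perm (Fin m ⊕ Fin p),
      (∑ y, ex (σ y) y) = ∑ j : Fin p, ((e (σ⁻¹ (Sum.inr j)) : ℕ) - (j : ℕ)) := by
    intro σ
    have h1 : ∑ y, ex (σ y) y = ∑ x, ex x (σ⁻¹ x) := by
      rw [← Equiv.sum_comp σ (fun x => ex x (σ⁻¹ x))]
      refine Finset.sum_congr rfl fun y _ => ?_
      rw [← Equiv.Perm.mul_apply, inv_mul_cancel, Equiv.Perm.one_apply]
    rw [h1, Fintype.sum_sum_type]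
    simp only [hex_def, Sum.elim_inl, Sum.elim_inr, Finset.sum_const_zero, zero_add]
  -- facts from a nonzero coefficient product
  have hfacts : ∀ σ : Equiv.Perm (Fin m ⊕ Fin p), (∏ y, co (σ y) y) ≠ 0 →
      (∀ i : Fin m, (q i : ℕ) ≤ (e (σ⁻¹ (Sum.inl i)) : ℕ)) ∧
      (∀ j : Fin p, (j : ℕ) ≤ (e (σ⁻¹ (Sum.inr j)) : ℕ)) := by
    intro σ hw
    rw [Finset.prod_ne_zero_iff] at hw
    constructor
    · intro i
      have h1 := hw (σ⁻¹ (Sum.inl i)) (Finset.mem_univ _)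
      rw [← Equiv.Perm.mul_apply, mul_inv_cancel, Equiv.Perm.one_apply] at h1
      simp only [hco_def, Sum.elim_inl] at h1
      by_contra hcon
      push_neg at hcon
      exact h1 (hech i _ (Fin.lt_def.mpr hcon))
    · intro j
      have h1 := hw (σ⁻¹ (Sum.inr j)) (Finset.mem_univ _)
      rw [← Equiv.Perm.mul_apply, mul_inv_cancel, Equiv.Perm.one_apply] at h1
      simp only [hco_def, Sum.elim_inr] at h1
      by_contra hcon
      push_neg at hcon
      exact h1 (hzero j _ hcon)
  have hNval : N = (∑ j : Fin p, (qc j : ℕ)) - ∑ j : Fin p, (j : ℕ) :=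
    Finset.sum_tsub_distrib Finset.univ (fun j _ => fin_le_of_strictMono hqc j)
  have hjle : ∑ j : Fin p, (j : ℕ) ≤ ∑ j : Fin p, (qc j : ℕ) :=
    Finset.sum_le_sum fun j _ => fin_le_of_strictMono hqc j
  -- the parametrization of the "good" permutations
  set f : Equiv.Perm (Fin p) → Equiv.Perm (Fin m ⊕ Fin p) :=
    fun π => ((Equiv.sumCongr (Equiv.refl (Fin m)) π).trans τ)⁻¹ with hf_def
  have hfinv : ∀ π, (f π)⁻¹ = (Equiv.sumCongr (Equiv.refl (Fin m)) π).trans τ := by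
    intro π; rw [hf_def]; exact inv_inv _
  have hfl : ∀ (π : Equiv.Perm (Fin p)) (i : Fin m), (f π)⁻¹ (Sum.inl i) = e.symm (q i) := by
    intro π i; rw [hfinv]; rfl
  have hfr : ∀ (π : Equiv.Perm (Fin p)) (j : Fin p), (f π)⁻¹ (Sum.inr j) = e.symm (qc (π j)) := by
    intro π j; rw [hfinv]; rfl
  -- a permutation contributing to the N-th coefficient is good
  have hgood : ∀ σ : Equiv.Perm (Fin m ⊕ Fin p), (∏ y, co (σ y) y) ≠ 0 →
      (∑ y, ex (σ y) y) = N → ∃ π : Equiv.Perm (Fin p), σ = f π := by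
    intro σ hw hE
    obtain ⟨hKge, hMge⟩ := hfacts σ hw
    have hEval : (∑ y, ex (σ y) y)
        = (∑ j : Fin p, (e (σ⁻¹ (Sum.inr j)) : ℕ)) - ∑ j : Fin p, (j : ℕ) := by
      rw [hEsum σ]
      exact Finset.sum_tsub_distrib Finset.univ (fun j _ => hMge j)
    have hjle2 : ∑ j : Fin p, (j : ℕ) ≤ ∑ j : Fin p, (e (σ⁻¹ (Sum.inr j)) : ℕ) :=
      Finset.sum_le_sum fun j _ => hMge j
    have hKle : ∑ i : Fin m, (q i : ℕ) ≤ ∑ i : Fin m, (e (σ⁻¹ (Sum.inl i)) : ℕ) :=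
      Finset.sum_le_sum fun i _ => hKge i
    have hsq : ∑ i : Fin m, (e (σ⁻¹ (Sum.inl i)) : ℕ) = ∑ i : Fin m, (q i : ℕ) := by
      have hs := hsum_split σ
      rw [hE] at hEval
      omega
    have hpt : ∀ i : Fin m, (q i : ℕ) = (e (σ⁻¹ (Sum.inl i)) : ℕ) :=
      fun i => (Finset.sum_eq_sum_iff_of_le (fun i _ => hKge i)).mp hsq.symm i
        (Finset.mem_univ i)
    have hinl : ∀ i : Fin m, σ⁻¹ (Sum.inl i) = e.symm (q i) := by
      intro i
      have h0 : e (σ⁻¹ (Sum.inl i)) = q i := Fin.val_injective (hpt i).symm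
      rw [← h0, Equiv.symm_apply_apply]
    have hzc : ∀ j : Fin p, e (σ⁻¹ (Sum.inr j)) ∈ Pᶜ := by
      intro j
      rw [Finset.mem_compl]
      intro hmem
      rw [hP_def, Finset.mem_image] at hmem
      obtain ⟨i, _, hi⟩ := hmem
      have h1 : σ⁻¹ (Sum.inr j) = e.symm (q i) := by
        rw [hi, Equiv.symm_apply_apply]
      rw [← hinl i] at h1
      have h2 := (Equiv.injective σ⁻¹) h1
      simp at h2
    set π0 : Fin p → Fin p := fun j => oiso.symm ⟨e (σ⁻¹ (Sum.inr j)), hzc j⟩ with hπ0_def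
    have hπ0 : ∀ j, qc (π0 j) = e (σ⁻¹ (Sum.inr j)) := by
      intro j
      simp only [hqc_def, hπ0_def, OrderIso.apply_symm_apply]
    have hπ0inj : Function.Injective π0 := by
      intro a c h
      have h2 := congrArg qc h
      rw [hπ0, hπ0] at h2
      have h3 := e.injective h2
      simpa using (Equiv.injective σ⁻¹ h3)
    set π : Equiv.Perm (Fin p) :=
      Equiv.ofBijective π0 (Finite.injective_iff_bijective.mp hπ0inj) with hπ_def
    have hπapp : ∀ j, π j = π0 j := fun j => rfl
    have hinveq : σ⁻¹ = (Equiv.sumCongr (Equiv.refl (Fin m)) π).trans τ := by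
      apply Equiv.ext
      rintro (i | j)
      · show σ⁻¹ (Sum.inl i) = τ (Sum.inl i)
        rw [hinl i, hτl]
      · show σ⁻¹ (Sum.inr j) = τ (Sum.inr (π j))
        calc σ⁻¹ (Sum.inr j) = e.symm (e (σ⁻¹ (Sum.inr j))) := (Equiv.symm_apply_apply _ _).symm
          _ = e.symm (qc (π j)) := by rw [hπapp, hπ0 j]
          _ = τ (Sum.inr (π j)) := (hτr _).symm
    refine ⟨π, ?_⟩
    calc σ = (σ⁻¹)⁻¹ := (inv_inv σ).symm
      _ = f π := by rw [hinveq, hf_def]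
  have hfinj : Function.Injective f := by
    intro a c h
    have h2 : (f a)⁻¹ = (f c)⁻¹ := by rw [h]
    rw [hfinv, hfinv] at h2
    apply Equiv.ext
    intro j
    have h3 : τ (Sum.inr (a j)) = τ (Sum.inr (c j)) := by
      have h4 := congrArg (fun g : Equiv.Perm (Fin m ⊕ Fin p) => g (Sum.inr j)) h2
      simpa using h4
    have h5 := τ.injective h3
    simpa using h5
  -- values on good permutations
  have hwf : ∀ π : Equiv.Perm (Fin p),
      (∏ y, co (f π y) y) = (∏ i, K' i (q i)) * ∏ j, Mcoef j (qc (π j)) := by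
    intro π
    have h1 : (∏ y, co (f π y) y) = ∏ x, co x ((f π)⁻¹ x) := by
      rw [← Equiv.prod_comp (f π) (fun x => co x ((f π)⁻¹ x))]
      refine Finset.prod_congr rfl fun y _ => ?_
      rw [← Equiv.Perm.mul_apply, inv_mul_cancel, Equiv.Perm.one_apply]
    rw [h1, Fintype.prod_sum_type]
    congr 1
    · refine Finset.prod_congr rfl fun i _ => ?_
      rw [hfl]
      simp only [hco_def, Sum.elim_inl, Equiv.apply_symm_apply]
    · refine Finset.prod_congr rfl fun j _ => ?_
      rw [hfr]
      simp only [hco_def, Sum.elim_inr, Equiv.apply_symm_apply]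
  have hEf : ∀ π : Equiv.Perm (Fin p), (∏ y, co (f π y) y) ≠ 0 →
      (∑ y, ex (f π y) y) = N := by
    intro π hw
    obtain ⟨_, hMge⟩ := hfacts (f π) hw
    have h1 : ∀ j : Fin p, (j : ℕ) ≤ (qc (π j) : ℕ) := by
      intro j
      have h0 := hMge j
      rwa [hfr π j, Equiv.apply_symm_apply] at h0
    have h2 : ∀ j : Fin p, (e ((f π)⁻¹ (Sum.inr j)) : ℕ) = (qc (π j) : ℕ) := by
      intro j; rw [hfr π j, Equiv.apply_symm_apply]
    rw [hEsum (f π)]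
    calc ∑ j : Fin p, ((e ((f π)⁻¹ (Sum.inr j)) : ℕ) - (j : ℕ))
        = ∑ j : Fin p, ((qc (π j) : ℕ) - (j : ℕ)) := by
          refine Finset.sum_congr rfl fun j _ => ?_
          rw [h2]
      _ = (∑ j : Fin p, (qc (π j) : ℕ)) - ∑ j : Fin p, (j : ℕ) :=
          Finset.sum_tsub_distrib Finset.univ (fun j _ => h1 j)
      _ = (∑ j : Fin p, (qc j : ℕ)) - ∑ j : Fin p, (j : ℕ) := by
          rw [Equiv.sum_comp π (fun j => (qc j : ℕ))]
      _ = N := hNval.symm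
  -- signs
  have hsgn : ∀ π : Equiv.Perm (Fin p),
      Equiv.Perm.sign (f π) = Equiv.Perm.sign τ * Equiv.Perm.sign π := by
    intro π
    have h0 : f π = ((Equiv.sumCongr (Equiv.refl (Fin m)) π).trans τ)⁻¹ := rfl
    rw [h0, Equiv.Perm.sign_inv]
    have h1 : (Equiv.sumCongr (Equiv.refl (Fin m)) π).trans τ
        = τ * (Equiv.sumCongr (Equiv.refl (Fin m)) π) := rfl
    rw [h1, map_mul, Equiv.Perm.sign_sumCongr]
    simp
  -- compute the coefficient
  have hcoeff : A.det.coeff N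
      = ((Equiv.Perm.sign τ : ℤ) : F) * (∏ i, K' i (q i)) *
        ∑ π : Equiv.Perm (Fin p),
          ((Equiv.Perm.sign π : ℤ) : F) * ∏ j, Mcoef j (qc (π j)) := by
    rw [hdet]
    rw [← Finset.sum_subset
      (Finset.subset_univ ((Finset.univ : Finset (Equiv.Perm (Fin p))).image f)) ?hz]
    · rw [Finset.sum_image (fun a _ c _ h => hfinj h), mul_assoc, Finset.mul_sum,
        Finset.mul_sum]
      refine Finset.sum_congr rfl fun π _ => ?_
      by_cases hw : (∏ y, co (f π y) y) = 0
      · have hM0 : (∏ j, Mcoef j (qc (π j))) = 0 := by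
          have h3 := hwf π
          rw [hw] at h3
          rcases mul_eq_zero.mp h3.symm with h | h
          · exact absurd h (Finset.prod_ne_zero_iff.mpr fun i _ => hpiv i)
          · exact h
        rw [hM0, hw]
        simp
      · rw [if_pos (hEf π hw), hwf π, hsgn π]
        push_cast
        ring
    case hz =>
      intro σ _ hσ
      by_cases hw : (∏ y, co (σ y) y) = 0
      · rw [hw]
        simp
      · by_cases hE : (∑ y, ex (σ y) y) = N
        · exfalso
          obtain ⟨π, rfl⟩ := hgood σ hw hE
          exact hσ (Finset.mem_image_of_mem f (Finset.mem_univ π))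
        · rw [if_neg hE, mul_zero]
  have hDdet : (∑ π : Equiv.Perm (Fin p),
        ((Equiv.Perm.sign π : ℤ) : F) * ∏ j, Mcoef j (qc (π j)))
      = (Mcoef.submatrix id qc).det := by
    rw [← Matrix.det_transpose (Mcoef.submatrix id qc), Matrix.det_apply']
    refine Finset.sum_congr rfl fun π _ => rfl
  have hfinal : A.det.coeff N ≠ 0 := by
    rw [hcoeff, hDdet]
    refine mul_ne_zero (mul_ne_zero ?_ ?_) ?_
    · rcases Int.units_eq_one_or (Equiv.Perm.sign τ) with h | h <;> simp [h]
    · exact Finset.prod_ne_zero_iff.mpr fun i _ => hpiv i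
    · exact hMDS qc hqc.injective
  intro hcon
  rw [hcon, Polynomial.coeff_zero] at hfinal
  exact hfinal rfl

/-- Let `M(s)` be the `p × (m+p)` monomial matrix with MDS coefficient matrix
`Mcoef = [I_p R]` (all `p × p` minors of `Mcoef` nonzero) and degree matrix
`d_{i,j} = j − i` for `j ≥ i` and `0` otherwise, i.e. `M(s)_{i,j} = Mcoef_{i,j} s^{j−i}`.
Then for every full-rank `m × (m+p)` matrix `[K₁ K₂]` over `F`, the polynomial
`det [[K₁ K₂], [M(s)]]` is not the zero polynomial. -/
theorem stmt16 (F : Type*) [Field F] (p m : ℕ)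
    (Mcoef : Matrix (Fin p) (Fin (m + p)) F)
    (hform : ∀ (i : Fin p) (j : Fin (m + p)), (j : ℕ) < p →
      Mcoef i j = if (i : ℕ) = (j : ℕ) then 1 else 0)
    (hMDS : ∀ cols : Fin p → Fin (m + p), Function.Injective cols →
      (Mcoef.submatrix id cols).det ≠ 0)
    (Mpoly : Matrix (Fin p) (Fin (m + p)) F[X])
    (hMpoly : ∀ (i : Fin p) (j : Fin (m + p)),
      Mpoly i j = C (Mcoef i j) * X ^ ((j : ℕ) - (i : ℕ)))
    (K : Matrix (Fin m) (Fin (m + p)) F) (hK : K.rank = m) :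
    ((Matrix.fromRows (K.map C) Mpoly).submatrix
        (finSumFinEquiv.symm : Fin (m + p) ≃ Fin m ⊕ Fin p) id).det ≠ 0 := by
  have key_det := fun (K' : Matrix (Fin m) (Fin (m + p)) F)
      (q : Fin m → Fin (m + p)) (hq : StrictMono q)
      (hpiv : ∀ i, K' i (q i) ≠ 0) (hech : ∀ i j, j < q i → K' i j = 0) =>
    _root_.key_det Mcoef
      (fun i j hij => by
        rw [hform i j (lt_trans hij i.isLt)]
        simp [Nat.ne_of_gt hij])
      hMDS Mpoly hMpoly K' q hq hpiv hech
  have echelon_basis := fun (W : Submodule F (Fin (m + p) → F))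
      (hW : Module.finrank F W = m) => _root_.echelon_basis m W hW
  have echelon_indep := fun (r : Fin m → Fin (m + p) → F) (q : Fin m → Fin (m + p))
      (hq : StrictMono q) (hpiv : ∀ i, r i (q i) ≠ 0)
      (hech : ∀ i j, j < q i → r i j = 0) => _root_.echelon_indep r q hq hpiv hech
  classical
  have hzero : ∀ (i : Fin p) (j : Fin (m + p)), (j : ℕ) < (i : ℕ) → Mcoef i j = 0 := by
    intro i j hij
    rw [hform i j (lt_trans hij i.isLt)]
    simp [Nat.ne_of_gt hij]
  -- row space
  have hKrank : Module.finrank F (Submodule.span F (Set.range K)) = m := by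
    exact (Matrix.rank_eq_finrank_span_row K).symm.trans hK
  obtain ⟨r, q, hq, hmem, hpiv, hech⟩ := echelon_basis (Submodule.span F (Set.range K)) hKrank
  have hcoef : ∀ i, ∃ c : Fin m → F, ∑ k, c k • K k = r i :=
    fun i => (Submodule.mem_span_range_iff_exists_fun F).mp (hmem i)
  choose U hU using hcoef
  set Umat : Matrix (Fin m) (Fin m) F := Matrix.of U with hUmat_def
  have hUK : ∀ i j, (Umat * K) i j = r i j := by
    intro i j
    have h1 := congrFun (hU i) j
    rw [Finset.sum_apply] at h1
    simp only [Pi.smul_apply, smul_eq_mul] at h1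
    simpa [Matrix.mul_apply, hUmat_def] using h1
  have hrind : LinearIndependent F r := echelon_indep r q hq hpiv hech
  have hUdet : Umat.det ≠ 0 := by
    intro h
    obtain ⟨v, hv, hvU⟩ := Matrix.exists_vecMul_eq_zero_iff.mpr h
    apply hv
    have h2 : Matrix.vecMul v (Umat * K) = 0 := by
      rw [← Matrix.vecMul_vecMul, hvU, Matrix.zero_vecMul]
    have h3 : ∑ i, v i • r i = 0 := by
      funext j
      have h4 := congrFun h2 j
      rw [Finset.sum_apply]
      simp only [Pi.smul_apply, smul_eq_mul]
      simp only [Matrix.vecMul, dotProduct] at h4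
      calc ∑ i, v i * r i j = ∑ i, v i * (Umat * K) i j := by
            refine Finset.sum_congr rfl fun i _ => ?_
            rw [hUK]
        _ = 0 := h4
    have h5 := Fintype.linearIndependent_iff.mp hrind v h3
    funext i
    exact h5 i
  -- apply the key lemma to U * K
  have hkey := key_det (Umat * K) q hq
    (fun i => by rw [hUK]; exact hpiv i)
    (fun i j hj => by rw [hUK]; exact hech i j hj)
  -- relate the two determinants
  set e := (finSumFinEquiv : Fin m ⊕ Fin p ≃ Fin (m + p)) with he_def
  have hblock : Matrix.fromRows ((Umat * K).map C) Mpoly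
      = (Matrix.fromBlocks (Umat.map C) 0 0 (1 : Matrix (Fin p) (Fin p) F[X]))
        * Matrix.fromRows (K.map C) Mpoly := by
    refine Matrix.ext fun x j => ?_
    cases x with
    | inl i =>
        simp only [Matrix.fromRows_apply_inl, Matrix.mul_apply, Fintype.sum_sum_type,
          Matrix.fromBlocks_apply₁₁, Matrix.fromBlocks_apply₁₂, Matrix.of_apply,
          Matrix.map_apply, Matrix.zero_apply, zero_mul, Finset.sum_const_zero, add_zero]
        calc Polynomial.C (∑ k : Fin m, Umat i k * K k j)
            = ∑ k : Fin m, Polynomial.C (Umat i k * K k j) :=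
              map_sum (Polynomial.C : F →+* F[X]) _ Finset.univ
          _ = ∑ k : Fin m, Polynomial.C (Umat i k) * Polynomial.C (K k j) :=
              Finset.sum_congr rfl fun k _ => map_mul C _ _
    | inr i =>
        simp only [Matrix.fromRows_apply_inl, Matrix.fromRows_apply_inr, Matrix.mul_apply,
          Fintype.sum_sum_type, Matrix.fromBlocks_apply₂₁, Matrix.fromBlocks_apply₂₂,
          Matrix.of_apply, Matrix.zero_apply, zero_mul, Finset.sum_const_zero, zero_add,
          Matrix.one_apply]
        simp
  have hsub : (Matrix.fromRows ((Umat * K).map C) Mpoly).submatrix id ⇑e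
      = (Matrix.fromBlocks (Umat.map C) 0 0 (1 : Matrix (Fin p) (Fin p) F[X]))
        * ((Matrix.fromRows (K.map C) Mpoly).submatrix id ⇑e) := by
    rw [hblock]
    ext x y
    simp [Matrix.submatrix, Matrix.mul_apply]
  have hdetprod : ((Matrix.fromRows ((Umat * K).map C) Mpoly).submatrix id ⇑e).det
      = C Umat.det * ((Matrix.fromRows (K.map C) Mpoly).submatrix id ⇑e).det := by
    rw [hsub, Matrix.det_mul, Matrix.det_fromBlocks_zero₂₁, Matrix.det_one, mul_one]
    congr 1
    exact (RingHom.map_det Polynomial.C Umat).symm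
  have hKdet : ((Matrix.fromRows (K.map C) Mpoly).submatrix id ⇑e).det ≠ 0 := by
    intro h
    rw [hdetprod, h, mul_zero] at hkey
    exact hkey rfl
  -- move to the statement's form
  have hfinalmat : ((Matrix.fromRows (K.map C) Mpoly).submatrix
        (⇑(finSumFinEquiv.symm : Fin (m + p) ≃ Fin m ⊕ Fin p)) id).submatrix ⇑e ⇑e
      = (Matrix.fromRows (K.map C) Mpoly).submatrix id ⇑e := by
    rw [Matrix.submatrix_submatrix]
    have h1 : (⇑(finSumFinEquiv.symm : Fin (m + p) ≃ Fin m ⊕ Fin p) ∘ ⇑e) = id := by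
      funext x
      simp [he_def]
    have h2 : (id ∘ ⇑e) = ⇑e := rfl
    rw [h1, h2]
  intro hcon
  apply hKdet
  rw [← hfinalmat, Matrix.det_submatrix_equiv_self, hcon]
end
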